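/- Let X be an integral Noetherian scheme and s a non-generic point of Spec Γ(X, O_X). Then there exists an integral closed subscheme Y ⊊ X such that s lies in the closure of σ_X(Y), where σ_X : X → Spec Γ(X, O_X) is the canonical morphism. -/

import Mathlib

open CategoryTheory AlgebraicGeometry

/-- Let `X` be an integral Noetherian scheme and `s` a non-generic point of
`Spec Γ(X, O_X)` (i.e. a nonzero prime of the domain `Γ(X, O_X)`).  Then there is an integral
closed subscheme `Y ⊊ X` (an irreducible proper closed subset) such that `s` lies in the
closure of `σ_X(Y)`. -/
theorem stmt15 (X : Scheme) [IsIntegral X] [IsNoetherian X]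
    (s : PrimeSpectrum Γ(X, ⊤)) (hs : s.asIdeal ≠ ⊥) :
    ∃ Z : Set X, IsClosed Z ∧ IsIrreducible Z ∧ Z ≠ Set.univ ∧
      (s : PrimeSpectrum Γ(X, ⊤)) ∈ closure ((Scheme.toSpecΓ X).base '' Z) := by
  obtain ⟨f, hfs, hf0⟩ : ∃ f ∈ s.asIdeal, f ≠ 0 := Submodule.exists_mem_ne_zero_of_ne_bot hs
  set V : Set X := (↑(X.basicOpen f))ᶜ with hV
  have hVc : IsClosed V := (X.basicOpen f).2.isClosed_compl
  have hVprop : V ≠ Set.univ := by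
    intro h
    apply hf0
    rw [← AlgebraicGeometry.basicOpen_eq_bot_iff (X := X) f]
    ext x
    simp only [TopologicalSpace.Opens.coe_bot, Set.mem_empty_iff_false, iff_false]
    intro hx
    have : x ∈ V := h ▸ Set.mem_univ x
    exact this hx
  obtain ⟨S, hSirr, hSsup⟩ :=
    TopologicalSpace.NoetherianSpace.exists_finset_irreducible (⟨V, hVc⟩ : TopologicalSpace.Closeds X)
  have hVunion : V = ⋃ k ∈ S, (k : Set X) := by
    have := congrArg (fun c : TopologicalSpace.Closeds X => (c : Set X)) hSsup
    simpa [TopologicalSpace.Closeds.coe_finset_sup] using this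
  by_contra hcon
  push_neg at hcon
  classical
  -- for each irreducible piece, find a global section `g` with `s ∈ D(g)` avoiding its image
  have key : ∀ k ∈ S, ∃ g : Γ(X, ⊤), g ∉ s.asIdeal ∧
      (k : Set X) ⊆ (↑(X.basicOpen g))ᶜ := by
    intro k hk
    have hkV : (k : Set X) ⊆ V := by
      rw [hVunion]; exact Set.subset_biUnion_of_mem hk
    have hkne : (k : Set X) ≠ Set.univ := by
      intro h; exact hVprop (Set.eq_univ_of_univ_subset (h ▸ hkV))
    have hnc : s ∉ closure ((Scheme.toSpecΓ X).base '' (k : Set X)) :=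
      hcon (k : Set X) k.isClosed' (hSirr ⟨k, hk⟩) hkne
    obtain ⟨t, ⟨g, rfl⟩, hst, htsub⟩ :=
      PrimeSpectrum.isTopologicalBasis_basic_opens.exists_subset_of_mem_open
        (show s ∈ (closure ((Scheme.toSpecΓ X).base '' (k : Set X)))ᶜ from hnc)
        isClosed_closure.isOpen_compl
    refine ⟨g, ?_, ?_⟩
    · exact hst
    · intro x hx hxg
      have hxg' : x ∈ X.toSpecΓ ⁻¹ᵁ PrimeSpectrum.basicOpen g := by
        rw [Scheme.toSpecΓ_preimage_basicOpen]; exact hxg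
      exact htsub hxg' (subset_closure (Set.mem_image_of_mem _ hx))
  choose gk hgk1 hgk2 using key
  set g : Γ(X, ⊤) := ∏ k ∈ S.attach, gk k.1 k.2 with hg
  have hgs : g ∉ s.asIdeal := by
    intro h
    obtain ⟨k, _, hks⟩ := (Ideal.IsPrime.prod_mem_iff (hp := s.isPrime)).mp h
    exact hgk1 k.1 k.2 hks
  have hg0 : g ≠ 0 := fun h => hgs (h ▸ s.asIdeal.zero_mem)
  -- `D(g) ⊆ D(f)` in `X`
  have hle : X.basicOpen g ≤ X.basicOpen f := by
    intro x hx
    by_contra hxf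
    have hxV : x ∈ V := hxf
    rw [hVunion] at hxV
    obtain ⟨k, hkS, hxk⟩ := Set.mem_iUnion₂.mp hxV
    have hfac : X.basicOpen g ≤ X.basicOpen (gk k hkS) := by
      have : g = gk k hkS * ∏ j ∈ S.attach.erase ⟨k, hkS⟩, gk j.1 j.2 :=
        (Finset.mul_prod_erase _ (fun j : {x // x ∈ S} => gk j.1 j.2)
          (Finset.mem_attach S ⟨k, hkS⟩)).symm
      rw [this, Scheme.basicOpen_mul]
      exact inf_le_left
    exact hgk2 k hkS hxk (hfac hx)
  -- the Qcqs lemma : `Γ(X, D(g))` is the localization of `Γ(X, ⊤)` away from `g`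
  haveI hql : IsLocalization.Away g Γ(X, X.basicOpen g) := by
    refine isLocalization_basicOpen_of_qcqs (U := ⊤) ?_ ?_ g
    · exact isCompact_univ
    · intro U W _ _ hU _ _ _
      exact TopologicalSpace.NoetherianSpace.isCompact _
  -- `f` is a unit in `Γ(X, D(g))`
  have hfu : IsUnit (algebraMap Γ(X, ⊤) Γ(X, X.basicOpen g) f) := by
    have heq : algebraMap Γ(X, ⊤) Γ(X, X.basicOpen g) f =
        X.presheaf.map (homOfLE hle).op
          (X.presheaf.map (homOfLE (X.basicOpen_le f)).op f) := by
      show X.presheaf.map (homOfLE (X.basicOpen_le g)).op f = _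
      rw [← CategoryTheory.comp_apply, ← Functor.map_comp, ← op_comp]
      rfl
    rw [heq]
    exact (X.toRingedSpace.isUnit_res_basicOpen f).map (X.presheaf.map (homOfLE hle).op).hom
  -- hence `g ^ n ∈ (f) ⊆ s`, contradiction
  obtain ⟨⟨a, m⟩, hu⟩ := IsLocalization.surj (M := Submonoid.powers g)
    (S := Γ(X, X.basicOpen g)) ((hfu.unit⁻¹ : Units _) : Γ(X, X.basicOpen g))
  obtain ⟨n, hn⟩ := m.2
  have hinj : Function.Injective (algebraMap Γ(X, ⊤) Γ(X, X.basicOpen g)) :=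
    IsLocalization.injective _ (powers_le_nonZeroDivisors_of_noZeroDivisors hg0)
  have hn' : (m : Γ(X, ⊤)) = g ^ n := hn.symm
  have heq2 : g ^ n = f * a := by
    apply hinj
    have h1 : (algebraMap Γ(X, ⊤) Γ(X, X.basicOpen g)) f * ↑hfu.unit⁻¹ = 1 :=
      hfu.mul_val_inv
    rw [map_mul, ← hu, ← mul_assoc, h1, one_mul, hn']
  have hpow : g ^ n ∈ s.asIdeal := heq2 ▸ Ideal.mul_mem_right _ _ hfs
  exact hgs (s.isPrime.mem_of_pow_mem n hpow)
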